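/- Let X and Y be Hilbert spaces, a : Y × Y → R a form linear in its second variable, b : Y × X → R a bilinear form, with associated operators A : Y → Y' defined by ⟨A(v), w⟩ = a(v,w) and B : Y → X' defined by ⟨B(v), r⟩ = b(v,r). Suppose A is strictly monotone (i.e., ⟨A(u) − A(w), u − w⟩ ≥ 0 for all u, w with equality only if u = w) and B is surjective. Then for any f ∈ X' and g ∈ Y', the problem: find u ∈ Y, p ∈ X such that a(u,v) − b(v,p) = g(v) for all v ∈ Y and b(u,r) = f(r) for all r ∈ X, has at most one solution. -/

import Mathlib

/-- Uniqueness for the abstract mixed problem: if `A` is strictly monotone and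
`B` is surjective onto the dual, then the mixed problem has at most one solution. -/
theorem mixed_problem_uniqueness
    (X Y : Type*) [NormedAddCommGroup X] [InnerProductSpace ℝ X] [CompleteSpace X]
    [NormedAddCommGroup Y] [InnerProductSpace ℝ Y] [CompleteSpace Y]
    (a : Y → Y → ℝ) (b : Y → X → ℝ)
    (ha_lin : ∀ u : Y, IsLinearMap ℝ (a u))
    (hb_lin₁ : ∀ r : X, IsLinearMap ℝ (fun v => b v r))
    (hb_lin₂ : ∀ v : Y, IsLinearMap ℝ (b v))
    -- `A` strictly monotone: `⟨A(u) - A(w), u - w⟩ ≥ 0` with equality only if `u = w`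
    (hA_mono : ∀ u w : Y, 0 ≤ a u (u - w) - a w (u - w))
    (hA_strict : ∀ u w : Y, a u (u - w) - a w (u - w) = 0 → u = w)
    -- `B : Y → X'` surjective
    (hB_surj : ∀ φ : X →L[ℝ] ℝ, ∃ v : Y, ∀ r : X, b v r = φ r)
    (f : X →L[ℝ] ℝ) (g : Y →L[ℝ] ℝ) :
    ∀ u p u' p',
      ((∀ v : Y, a u v - b v p = g v) ∧ (∀ r : X, b u r = f r)) →
      ((∀ v : Y, a u' v - b v p' = g v) ∧ (∀ r : X, b u' r = f r)) →
      u = u' ∧ p = p' := by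
  rintro u p u' p' ⟨h1, h2⟩ ⟨h1', h2'⟩
  -- key: a u (u-u') - a u' (u-u') = b (u-u') (p - p') = 0
  have hb : ∀ v : Y, a u v - a u' v = b v p - b v p' := by
    intro v
    have := h1 v
    have := h1' v
    linarith
  have hbu : ∀ r : X, b u r - b u' r = 0 := fun r => by
    have := h2 r; have := h2' r; linarith
  have hkey : a u (u - u') - a u' (u - u') = 0 := by
    have h := hb (u - u')
    have e1 : b (u - u') p = b u p - b u' p := by
      simpa [sub_eq_add_neg, (hb_lin₁ p).map_neg] using (hb_lin₁ p).map_add u (-u')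
    have e2 : b (u - u') p' = b u p' - b u' p' := by
      simpa [sub_eq_add_neg, (hb_lin₁ p').map_neg] using (hb_lin₁ p').map_add u (-u')
    have := hbu p
    have := hbu p'
    linarith
  have huu : u = u' := hA_strict u u' hkey
  subst huu
  refine ⟨rfl, ?_⟩
  -- now b v (p - p') = 0 for all v
  have hbp : ∀ v : Y, b v (p - p') = 0 := by
    intro v
    have e : b v (p - p') = b v p - b v p' := by
      simpa [sub_eq_add_neg, (hb_lin₂ v).map_neg] using (hb_lin₂ v).map_add p (-p')
    have := hb v
    linarith
  obtain ⟨v, hv⟩ := hB_surj (InnerProductSpace.toDual ℝ X (p - p'))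
  have : (inner ℝ (p - p') (p - p') : ℝ) = 0 := by
    have := hv (p - p')
    rw [InnerProductSpace.toDual_apply_apply] at this
    rw [← this, hbp]
  have : p - p' = 0 := by
    have := inner_self_eq_zero.mp this
    exact this
  exact sub_eq_zero.mp this
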